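/- Fix an integer n ≥ 2 and let △ₙ := {z ∈ ℂⁿ : |z₁| < |z₂| < ⋯ < |zₙ| < 1} and 𝕋ⁿ := {z ∈ ℂⁿ : |z₁| = ⋯ = |zₙ| = 1}. Then: (a) 𝕋ⁿ is contained in the topological boundary of △ₙ; (b) every function f continuous on the closure of △ₙ and holomorphic on △ₙ satisfies |f(z)| ≤ sup_{w∈𝕋ⁿ}|f(w)| for all z ∈ △ₙ; and (c) every closed subset S of the topological boundary of △ₙ such that |f(z)| ≤ sup_{w∈S}|f(w)| holds for all z ∈ △ₙ and all such f must contain 𝕋ⁿ. In other words, 𝕋ⁿ is the distinguished boundary of the n-dimensional Hartogs triangle △ₙ. -/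

import Mathlib

/-- The `n`-dimensional Hartogs triangle `△ₙ = {z : |z₁| < |z₂| < ⋯ < |zₙ| < 1}`. -/
def hartogsTriangle (n : ℕ) : Set (Fin n → ℂ) :=
  {z | (StrictMono fun i => ‖z i‖) ∧ ∀ i, ‖z i‖ < 1}

/-- The torus `𝕋ⁿ = {z : |z₁| = ⋯ = |zₙ| = 1}` inside `ℂⁿ`. -/
def torusSet (n : ℕ) : Set (Fin n → ℂ) := {z | ∀ i, ‖z i‖ = 1}

open Set Metric Filter

variable {n : ℕ}

lemma HT.mem_triangle_iff {z : Fin n → ℂ} :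
    z ∈ hartogsTriangle n ↔ (∀ i j : Fin n, i < j → ‖z i‖ < ‖z j‖) ∧ ∀ i, ‖z i‖ < 1 := by
  simp only [hartogsTriangle, Set.mem_setOf_eq]
  exact ⟨fun ⟨h1, h2⟩ => ⟨fun i j h => h1 h, h2⟩, fun ⟨h1, h2⟩ => ⟨fun i j h => h1 i j h, h2⟩⟩

lemma HT.mem_torus_iff {z : Fin n → ℂ} :
    z ∈ torusSet n ↔ ∀ i, ‖z i‖ = 1 := by
  simp only [torusSet, Set.mem_setOf_eq]

lemma HT.triangle_open : IsOpen (hartogsTriangle n) := by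
  have h : hartogsTriangle n =
      (⋂ i : Fin n, ⋂ j : Fin n, {z : Fin n → ℂ | i < j → ‖z i‖ < ‖z j‖}) ∩
        ⋂ i : Fin n, {z : Fin n → ℂ | ‖z i‖ < 1} := by
    ext z
    simp only [mem_inter_iff, mem_iInter, mem_setOf_eq, HT.mem_triangle_iff]
  rw [h]
  refine IsOpen.inter (isOpen_iInter_of_finite fun i => isOpen_iInter_of_finite fun j => ?_)
    (isOpen_iInter_of_finite fun i => ?_)
  · by_cases hij : i < j
    · have : {z : Fin n → ℂ | i < j → ‖z i‖ < ‖z j‖} = {z : Fin n → ℂ | ‖z i‖ < ‖z j‖} := by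
        ext z; simp [hij]
      rw [this]
      exact isOpen_lt ((continuous_apply i).norm) ((continuous_apply j).norm)
    · have : {z : Fin n → ℂ | i < j → ‖z i‖ < ‖z j‖} = univ := by
        ext z; simp [hij]
      rw [this]; exact isOpen_univ
  · exact isOpen_lt ((continuous_apply i).norm) continuous_const

lemma HT.polyball_eq : {t : Fin n → ℂ | ∀ i, ‖t i‖ ≤ 1} = closedBall 0 1 := by
  ext x
  rw [mem_setOf_eq, mem_closedBall_zero_iff, pi_norm_le_iff_of_nonneg zero_le_one]

lemma HT.triangle_subset_polyball : hartogsTriangle n ⊆ closedBall 0 1 := by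
  rw [← HT.polyball_eq]
  exact fun z hz i => ((HT.mem_triangle_iff.mp hz).2 i).le

lemma HT.closure_subset : closure (hartogsTriangle n) ⊆ {z : Fin n → ℂ | ∀ i, ‖z i‖ ≤ 1} := by
  rw [HT.polyball_eq]
  exact closure_minimal HT.triangle_subset_polyball Metric.isClosed_closedBall

lemma HT.isCompact_closure : IsCompact (closure (hartogsTriangle n)) :=
  (isCompact_closedBall 0 1).of_isClosed_subset isClosed_closure
    (closure_minimal HT.triangle_subset_polyball Metric.isClosed_closedBall)

noncomputable def HT.psi {n : ℕ} (t : Fin n → ℂ) (i : Fin n) : ℂ := ∏ j ∈ Finset.Ici i, t j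

variable {n : ℕ}

lemma HT.psi_peel (t : Fin n → ℂ) (i : Fin n) (h : (i : ℕ) + 1 < n) :
    HT.psi t i = t i * HT.psi t ⟨(i : ℕ) + 1, h⟩ := by
  have hins : Finset.Ici i = insert i (Finset.Ici (⟨(i : ℕ) + 1, h⟩ : Fin n)) := by
    ext j
    simp only [Finset.mem_Ici, Finset.mem_insert, Fin.le_def, Fin.ext_iff]
    omega
  have hnot : i ∉ Finset.Ici (⟨(i : ℕ) + 1, h⟩ : Fin n) := by
    simp [Finset.mem_Ici, Fin.le_def]
  rw [HT.psi, hins, Finset.prod_insert hnot, HT.psi]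

lemma HT.psi_last (t : Fin n → ℂ) (i : Fin n) (h : ¬ (i : ℕ) + 1 < n) :
    HT.psi t i = t i := by
  have hsing : Finset.Ici i = {i} := by
    ext j
    have hj := j.isLt
    simp only [Finset.mem_Ici, Finset.mem_singleton, Fin.le_def, Fin.ext_iff]
    omega
  rw [HT.psi, hsing, Finset.prod_singleton]

lemma HT.psi_norm (t : Fin n → ℂ) (i : Fin n) :
    ‖HT.psi t i‖ = ∏ j ∈ Finset.Ici i, ‖t j‖ := by
  rw [HT.psi, norm_prod]

lemma HT.psi_ne_zero {t : Fin n → ℂ} (h : ∀ i, t i ≠ 0) (i : Fin n) : HT.psi t i ≠ 0 := by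
  rw [HT.psi, Finset.prod_ne_zero_iff]
  exact fun j _ => h j

lemma HT.prod_lt_one {s : Finset (Fin n)} {v : Fin n → ℝ} (h0 : ∀ j, 0 ≤ v j)
    (h1 : ∀ j, v j < 1) {i : Fin n} (hi : i ∈ s) : ∏ j ∈ s, v j < 1 := by
  rw [← Finset.mul_prod_erase s v hi]
  calc v i * ∏ j ∈ s.erase i, v j ≤ v i * 1 := by
        refine mul_le_mul_of_nonneg_left ?_ (h0 i)
        exact Finset.prod_le_one (fun j _ => h0 j) (fun j _ => (h1 j).le)
    _ < 1 := by rw [mul_one]; exact h1 i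

lemma HT.psi_mem_triangle {t : Fin n → ℂ} (h1 : ∀ i, ‖t i‖ < 1) (h2 : ∀ i, t i ≠ 0) :
    HT.psi t ∈ hartogsTriangle n := by
  refine HT.mem_triangle_iff.mpr ⟨fun i j hij => ?_, fun i => ?_⟩
  · have hsub : Finset.Ici j ⊆ Finset.Ici i := by
      intro x hx
      rw [Finset.mem_Ici] at hx ⊢
      exact le_trans hij.le hx
    have hsplit := Finset.prod_sdiff (f := fun j => ‖t j‖) hsub
    have hpos : 0 < ‖HT.psi t j‖ := norm_pos_iff.mpr (HT.psi_ne_zero h2 j)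
    rw [HT.psi_norm, HT.psi_norm, ← hsplit]
    have hfac : ∏ x ∈ Finset.Ici i \ Finset.Ici j, ‖t x‖ < 1 := by
      refine HT.prod_lt_one (fun j => norm_nonneg _) h1 (i := i) ?_
      rw [Finset.mem_sdiff, Finset.mem_Ici, Finset.mem_Ici]
      exact ⟨le_refl i, fun hji => absurd hij (not_lt.mpr hji)⟩
    calc (∏ x ∈ Finset.Ici i \ Finset.Ici j, ‖t x‖) * ∏ x ∈ Finset.Ici j, ‖t x‖
        < 1 * ∏ x ∈ Finset.Ici j, ‖t x‖ := by
          refine mul_lt_mul_of_pos_right hfac ?_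
          rw [← HT.psi_norm]; exact hpos
      _ = ∏ x ∈ Finset.Ici j, ‖t x‖ := one_mul _
  · rw [HT.psi_norm]
    exact HT.prod_lt_one (fun j => norm_nonneg _) h1 (Finset.mem_Ici.mpr (le_refl i))

lemma HT.psi_mem_torus {t : Fin n → ℂ} (h : ∀ i, ‖t i‖ = 1) (i : Fin n) :
    ‖HT.psi t i‖ = 1 := by
  rw [HT.psi_norm]
  exact Finset.prod_eq_one fun j _ => h j

lemma HT.psi_continuous : Continuous fun t : Fin n → ℂ => HT.psi t :=
  continuous_pi fun i => continuous_finset_prod _ fun j _ => continuous_apply j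

lemma HT.diffAt_finset_prod {E ι : Type*} [NormedAddCommGroup E] [NormedSpace ℂ E]
    [DecidableEq ι] (s : Finset ι) (F : ι → E → ℂ) (x : E)
    (h : ∀ i ∈ s, DifferentiableAt ℂ (F i) x) :
    DifferentiableAt ℂ (fun y => ∏ i ∈ s, F i y) x := by
  induction s using Finset.induction_on with
  | empty => simpa using differentiableAt_const (1 : ℂ)
  | @insert a s' hx ih =>
    have := (h a (Finset.mem_insert_self a s')).mul
      (ih fun i hi => h i (Finset.mem_insert_of_mem hi))
    simpa [Finset.prod_insert hx, Pi.mul_def] using this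

lemma HT.psi_differentiableAt (t : Fin n → ℂ) :
    DifferentiableAt ℂ (fun u : Fin n → ℂ => HT.psi u) t := by
  rw [differentiableAt_pi]
  intro i
  exact HT.diffAt_finset_prod _ _ _ fun j _ => differentiableAt_apply (𝕜 := ℂ) j t

lemma HT.psi_mem_closure {t : Fin n → ℂ} (ht : ∀ i, ‖t i‖ ≤ 1) :
    HT.psi t ∈ closure (hartogsTriangle n) := by
  set u : ℕ → (Fin n → ℂ) := fun m i =>
    (1 - ((m : ℝ) + 2)⁻¹) • (if t i = 0 then ((((m : ℝ) + 2)⁻¹ : ℝ) : ℂ) else t i) with hu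
  have hinvpos : ∀ m : ℕ, 0 < ((m : ℝ) + 2)⁻¹ := fun m => by positivity
  have hinvle : ∀ m : ℕ, ((m : ℝ) + 2)⁻¹ ≤ 2⁻¹ := fun m => by
    rw [inv_le_inv₀ (by positivity) (by norm_num)]
    · linarith [Nat.cast_nonneg (α := ℝ) m]
  have hcpos : ∀ m : ℕ, 0 < 1 - ((m : ℝ) + 2)⁻¹ := fun m => by
    have := hinvle m; norm_num at this ⊢; linarith
  have hclt : ∀ m : ℕ, 1 - ((m : ℝ) + 2)⁻¹ < 1 := fun m => by
    have := hinvpos m; linarith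
  have humem : ∀ m, HT.psi (u m) ∈ hartogsTriangle n := by
    intro m
    refine HT.psi_mem_triangle (fun i => ?_) (fun i => ?_)
    · rw [hu]
      simp only [norm_smul, Real.norm_eq_abs, abs_of_pos (hcpos m)]
      have hle1 : ‖(if t i = 0 then ((((m : ℝ) + 2)⁻¹ : ℝ) : ℂ) else t i)‖ ≤ 1 := by
        split
        · rw [Complex.norm_real, Real.norm_eq_abs, abs_of_pos (hinvpos m)]
          linarith [hinvle m]
        · exact ht i
      calc (1 - ((m : ℝ) + 2)⁻¹) * ‖(if t i = 0 then ((((m : ℝ) + 2)⁻¹ : ℝ) : ℂ) else t i)‖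
          ≤ (1 - ((m : ℝ) + 2)⁻¹) * 1 := mul_le_mul_of_nonneg_left hle1 (hcpos m).le
        _ < 1 := by rw [mul_one]; exact hclt m
    · rw [hu]
      refine smul_ne_zero ?_ ?_
      · exact ne_of_gt (hcpos m)
      · split
        · exact Complex.ofReal_ne_zero.mpr (ne_of_gt (hinvpos m))
        · assumption
  have hinvlim : Tendsto (fun m : ℕ => ((m : ℝ) + 2)⁻¹) atTop (nhds 0) :=
    tendsto_inv_atTop_zero.comp (tendsto_atTop_add_const_right _ 2 tendsto_natCast_atTop_atTop)
  have hulim : Tendsto u atTop (nhds t) := by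
    rw [tendsto_pi_nhds]
    intro i
    have hc : Tendsto (fun m : ℕ => 1 - ((m : ℝ) + 2)⁻¹) atTop (nhds 1) := by
      have := (tendsto_const_nhds (x := (1 : ℝ)) (f := atTop (α := ℕ))).sub hinvlim
      simpa using this
    have hv : Tendsto (fun m : ℕ => (if t i = 0 then ((((m : ℝ) + 2)⁻¹ : ℝ) : ℂ) else t i))
        atTop (nhds (t i)) := by
      split
      · rename_i h0
        rw [h0]
        have := (Complex.continuous_ofReal.tendsto 0).comp hinvlim
        simpa [Function.comp_def] using this
      · exact tendsto_const_nhds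
    have := hc.smul hv
    rw [one_smul] at this
    exact this
  have : Tendsto (fun m => HT.psi (u m)) atTop (nhds (HT.psi t)) :=
    (HT.psi_continuous.tendsto t).comp hulim
  exact mem_closure_of_tendsto this (Filter.Eventually.of_forall humem)

lemma HT.psi_sect {z : Fin n → ℂ} (hmono : ∀ i j : Fin n, i ≤ j → ‖z i‖ ≤ ‖z j‖)
    (hle : ∀ i, ‖z i‖ ≤ 1) (hnz : ∀ i : Fin n, (i : ℕ) ≠ 0 → z i ≠ 0) :
    ∃ t : Fin n → ℂ, (∀ i, ‖t i‖ ≤ 1) ∧ HT.psi t = z := by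
  classical
  set t : Fin n → ℂ := fun i =>
    if h : (i : ℕ) + 1 < n then z i / z ⟨(i : ℕ) + 1, h⟩ else z i with htdef
  have hnorm : ∀ i, ‖t i‖ ≤ 1 := by
    intro i
    simp only [htdef]
    by_cases h : (i : ℕ) + 1 < n
    · rw [dif_pos h, norm_div]
      have hz1 : z ⟨(i : ℕ) + 1, h⟩ ≠ 0 := hnz _ (by simp)
      rw [div_le_one (norm_pos_iff.mpr hz1)]
      exact hmono i _ (by rw [Fin.le_def]; simp)
    · rw [dif_neg h]; exact hle i
  refine ⟨t, hnorm, ?_⟩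
  funext i
  have key : ∀ m : ℕ, ∀ i : Fin n, n - 1 - (i : ℕ) ≤ m → HT.psi t i = z i := by
    intro m
    induction m with
    | zero =>
      intro i hi
      have hlast : ¬ (i : ℕ) + 1 < n := by omega
      rw [HT.psi_last t i hlast]
      simp only [htdef]
      exact dif_neg hlast
    | succ m ih =>
      intro i hi
      by_cases h : (i : ℕ) + 1 < n
      · have hsucc := ih ⟨(i : ℕ) + 1, h⟩ (by simp; omega)
        rw [HT.psi_peel t i h, hsucc]
        have : t i = z i / z ⟨(i : ℕ) + 1, h⟩ := by simp only [htdef]; exact dif_pos h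
        rw [this, div_mul_cancel₀]
        exact hnz _ (by simp)
      · rw [HT.psi_last t i h]
        simp only [htdef]
        exact dif_neg h
  exact key (n - 1 - (i : ℕ)) i (le_refl _)

lemma HT.polydisc_max {n : ℕ} (g : (Fin n → ℂ) → ℂ) (C : ℝ)
    (hgc : ContinuousOn g {t : Fin n → ℂ | ∀ i, ‖t i‖ ≤ 1})
    (hgd : ∀ t : Fin n → ℂ, (∀ i, ‖t i‖ < 1) → (∀ i, t i ≠ 0) → DifferentiableAt ℂ g t)
    (hC : ∀ w : Fin n → ℂ, (∀ i, ‖w i‖ = 1) → ‖g w‖ ≤ C) :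
    ∀ t : Fin n → ℂ, (∀ i, ‖t i‖ ≤ 1) → ‖g t‖ ≤ C := by
  classical
  set K : Set (Fin n → ℂ) := {t : Fin n → ℂ | ∀ i, ‖t i‖ ≤ 1} with hKdef
  have hKc : IsCompact K := by rw [hKdef, HT.polyball_eq]; exact isCompact_closedBall 0 1
  have hKnorm : ∀ u ∈ K, ‖u‖ ≤ 1 := by
    intro u hu
    rw [pi_norm_le_iff_of_nonneg zero_le_one]
    exact hu
  have hunif := hKc.uniformContinuousOn_of_continuous hgc
  rw [Metric.uniformContinuousOn_iff] at hunif
  intro t ht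
  refine le_of_forall_pos_le_add fun ε hε => ?_
  obtain ⟨δ, hδ0, hδ⟩ := hunif (ε / 2) (by linarith)
  set s : ℝ := max (1 - δ / 2) 2⁻¹ with hsdef
  have hs0 : 0 < s := lt_of_lt_of_le (by norm_num) (le_max_right _ _)
  have hs1 : s < 1 := by
    rw [hsdef, max_lt_iff]
    constructor
    · linarith
    · norm_num
  have hs1' : 1 - s ≤ δ / 2 := by
    have h := le_max_left (1 - δ / 2) 2⁻¹
    rw [← hsdef] at h
    linarith
  have hsmulK : ∀ u : Fin n → ℂ, (∀ i, ‖u i‖ ≤ 1) → ∀ i, ‖(s • u) i‖ ≤ 1 := by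
    intro u hu i
    have h : (s • u) i = s • u i := rfl
    rw [h, norm_smul, Real.norm_eq_abs, abs_of_pos hs0]
    calc s * ‖u i‖ ≤ s * 1 := mul_le_mul_of_nonneg_left (hu i) hs0.le
      _ ≤ 1 := by linarith
  have hsdist : ∀ u : Fin n → ℂ, (∀ i, ‖u i‖ ≤ 1) → dist (s • u) u < δ := by
    intro u hu
    have h1 : s • u - u = (s - 1) • u := by rw [sub_smul, one_smul]
    rw [dist_eq_norm, h1, norm_smul, Real.norm_eq_abs, abs_of_nonpos (by linarith)]
    have h2 : ‖u‖ ≤ 1 := hKnorm u hu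
    have h3 : -(s - 1) = 1 - s := by ring
    rw [h3]
    calc (1 - s) * ‖u‖ ≤ (1 - s) * 1 := mul_le_mul_of_nonneg_left h2 (by linarith)
      _ ≤ δ / 2 := by linarith
      _ < δ := by linarith
  have key : ∀ k : ℕ, ∀ u : Fin n → ℂ, (∀ i, ‖u i‖ ≤ 1) → (∀ i, u i ≠ 0) →
      (∀ i : Fin n, k ≤ (i : ℕ) → ‖u i‖ = 1) → ‖g (s • u)‖ ≤ C + ε / 2 := by
    intro k
    induction k with
    | zero =>
      intro u h1 h2 h3
      have hu1 : ∀ i, ‖u i‖ = 1 := fun i => h3 i (Nat.zero_le _)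
      have huK : u ∈ K := fun i => (hu1 i).le
      have hsuK : s • u ∈ K := hsmulK u h1
      have hdist : dist (g (s • u)) (g u) < ε / 2 := hδ _ hsuK _ huK (hsdist u h1)
      have htri := norm_sub_norm_le (g (s • u)) (g u)
      rw [← dist_eq_norm] at htri
      have hCu := hC u hu1
      linarith
    | succ k ih =>
      intro u h1 h2 h3
      by_cases hk : k < n
      · set ik : Fin n := ⟨k, hk⟩ with hikdef
        set h : ℂ → ℂ := fun lam => g (s • Function.update u ik lam) with hhdef
        have hupK : ∀ lam : ℂ, ‖lam‖ ≤ 1 → ∀ i, ‖Function.update u ik lam i‖ ≤ 1 := by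
          intro lam hlam i
          rcases eq_or_ne i ik with rfl | hne
          · rw [Function.update_self]; exact hlam
          · rw [Function.update_of_ne hne]; exact h1 i
        have hcont : ContinuousOn h (closedBall (0 : ℂ) 1) := by
          refine hgc.comp ?_ ?_
          · refine Continuous.continuousOn ?_
            refine Continuous.const_smul ?_ s
            refine continuous_pi fun j => ?_
            simp only [Function.update_apply]
            by_cases hj : j = ik
            · simp only [hj, if_pos]
              exact continuous_id
            · simp only [if_neg hj]
              exact continuous_const
          · intro lam hlam
            rw [mem_closedBall_zero_iff] at hlam
            exact hsmulK _ (hupK lam hlam)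
        have hdiff : DifferentiableOn ℂ h (ball (0 : ℂ) 1 \ {0}) := by
          rintro lam ⟨hlam, hlam0⟩
          rw [mem_ball_zero_iff] at hlam
          rw [mem_singleton_iff] at hlam0
          refine DifferentiableAt.differentiableWithinAt ?_
          have hinner : DifferentiableAt ℂ (fun lam : ℂ => s • Function.update u ik lam) lam := by
            refine DifferentiableAt.const_smul ?_ s
            rw [differentiableAt_pi]
            intro j
            simp only [Function.update_apply]
            by_cases hj : j = ik
            · simp only [hj, if_pos]
              exact differentiableAt_fun_id
            · simp only [if_neg hj]
              exact differentiableAt_const _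
          refine DifferentiableAt.comp lam ?_ hinner
          refine hgd _ (fun i => ?_) (fun i => ?_)
          · have hrfl : (s • Function.update u ik lam) i = s • Function.update u ik lam i := rfl
            rw [hrfl, norm_smul, Real.norm_eq_abs, abs_of_pos hs0]
            have hle1 : ‖Function.update u ik lam i‖ ≤ 1 := hupK lam hlam.le i
            calc s * ‖Function.update u ik lam i‖ ≤ s * 1 :=
                mul_le_mul_of_nonneg_left hle1 hs0.le
              _ < 1 := by linarith
          · have hrfl : (s • Function.update u ik lam) i = s • Function.update u ik lam i := rfl
            rw [hrfl]
            refine smul_ne_zero (ne_of_gt hs0) ?_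
            rcases eq_or_ne i ik with rfl | hne
            · rw [Function.update_self]; exact hlam0
            · rw [Function.update_of_ne hne]; exact h2 i
        have hball : DifferentiableOn ℂ h (ball (0 : ℂ) 1) := by
          have hbdd : BddAbove (norm ∘ h '' (ball (0 : ℂ) 1 \ {0})) := by
            obtain ⟨B, hB⟩ := (isCompact_closedBall (0 : ℂ) 1).exists_bound_of_continuousOn hcont
            refine ⟨B, ?_⟩
            rintro y ⟨x, hx, rfl⟩
            exact hB x (ball_subset_closedBall hx.1)
          have H := Complex.differentiableOn_update_limUnder_of_bddAbove
            (isOpen_ball.mem_nhds (mem_ball_self one_pos)) hdiff hbdd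
          have h0cl : (0 : ℂ) ∈ closure (ball (0 : ℂ) 1 \ {0}) := by
            rw [Metric.mem_closure_iff]
            intro r hr
            have hminpos : 0 < min r 1 / 2 := by
              have := lt_min hr one_pos
              positivity
            refine ⟨((min r 1 / 2 : ℝ) : ℂ), ⟨?_, ?_⟩, ?_⟩
            · rw [mem_ball_zero_iff, Complex.norm_real, Real.norm_eq_abs, abs_of_pos hminpos]
              have : min r 1 ≤ 1 := min_le_right _ _
              linarith
            · rw [mem_singleton_iff]
              exact Complex.ofReal_ne_zero.mpr (ne_of_gt hminpos)
            · rw [dist_zero_left, Complex.norm_real, Real.norm_eq_abs, abs_of_pos hminpos]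
              have : min r 1 ≤ r := min_le_left _ _
              linarith
          haveI hnb : (nhdsWithin (0 : ℂ) (ball (0 : ℂ) 1 \ {0})).NeBot :=
            mem_closure_iff_nhdsWithin_neBot.mp h0cl
          have t1 : Tendsto h (nhdsWithin (0 : ℂ) (ball (0 : ℂ) 1 \ {0})) (nhds (h 0)) :=
            (hcont 0 (mem_closedBall_self zero_le_one)).mono
              (Set.Subset.trans diff_subset ball_subset_closedBall)
          have t2 : Tendsto h (nhdsWithin (0 : ℂ) (ball (0 : ℂ) 1 \ {0}))
              (nhds (limUnder (nhdsWithin (0 : ℂ) {(0 : ℂ)}ᶜ) h)) := by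
            have hcw := (H 0 (mem_ball_self one_pos)).continuousWithinAt
            have h2' := hcw.tendsto
            rw [Function.update_self] at h2'
            have h3' := h2'.mono_left (nhdsWithin_mono (0 : ℂ) (Set.diff_subset (s := ball (0 : ℂ) 1) (t := ({0} : Set ℂ))))
            refine Filter.Tendsto.congr' ?_ h3'
            filter_upwards [self_mem_nhdsWithin] with x hx
            exact Function.update_of_ne (by simpa using hx.2) _ _
          have hL : limUnder (nhdsWithin (0 : ℂ) {(0 : ℂ)}ᶜ) h = h 0 :=
            tendsto_nhds_unique t2 t1
          rw [hL, Function.update_eq_self] at H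
          exact H
        have hdc : DiffContOnCl ℂ h (ball (0 : ℂ) 1) :=
          ⟨hball, by rw [closure_ball (0 : ℂ) one_ne_zero]; exact hcont⟩
        have hfr : ∀ ζ ∈ frontier (ball (0 : ℂ) 1), ‖h ζ‖ ≤ C + ε / 2 := by
          intro ζ hζ
          rw [frontier_ball (0 : ℂ) one_ne_zero, mem_sphere_zero_iff_norm] at hζ
          refine ih (Function.update u ik ζ) (hupK ζ hζ.le) (fun i => ?_) (fun i hi => ?_)
          · rcases eq_or_ne i ik with rfl | hne
            · rw [Function.update_self]
              intro h0
              rw [h0] at hζ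
              simp at hζ
            · rw [Function.update_of_ne hne]; exact h2 i
          · rcases eq_or_ne i ik with rfl | hne
            · rw [Function.update_self]; exact hζ
            · rw [Function.update_of_ne hne]
              refine h3 i ?_
              have hik : (i : ℕ) ≠ k := fun hik => hne (Fin.ext hik)
              omega
        have hmm := Complex.norm_le_of_forall_mem_frontier_norm_le isBounded_ball hdc hfr
          (z := u ik) (by
            rw [closure_ball (0 : ℂ) one_ne_zero, mem_closedBall_zero_iff]
            exact h1 ik)
        have heq : h (u ik) = g (s • u) := by
          simp only [hhdef, Function.update_eq_self]
        rw [heq] at hmm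
        exact hmm
      · refine ih u h1 h2 fun i hi => ?_
        exact absurd i.isLt (by omega)
  have key2 : ∀ u : Fin n → ℂ, (∀ i, ‖u i‖ ≤ 1) → ‖g (s • u)‖ ≤ C + ε / 2 := by
    intro u h1
    set v : ℕ → Fin n → ℂ := fun m i =>
      if u i = 0 then ((((m : ℝ) + 1)⁻¹ : ℝ) : ℂ) else u i with hvdef
    have hmpos : ∀ m : ℕ, 0 < ((m : ℝ) + 1)⁻¹ := fun m => by positivity
    have hmle : ∀ m : ℕ, ((m : ℝ) + 1)⁻¹ ≤ 1 := fun m => by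
      rw [inv_le_one_iff₀]
      right
      linarith [Nat.cast_nonneg (α := ℝ) m]
    have hv1 : ∀ m i, ‖v m i‖ ≤ 1 := by
      intro m i
      simp only [hvdef]
      by_cases h0 : u i = 0
      · rw [if_pos h0, Complex.norm_real, Real.norm_eq_abs, abs_of_pos (hmpos m)]
        exact hmle m
      · rw [if_neg h0]; exact h1 i
    have hv2 : ∀ m i, v m i ≠ 0 := by
      intro m i
      simp only [hvdef]
      by_cases h0 : u i = 0
      · rw [if_pos h0]
        exact Complex.ofReal_ne_zero.mpr (ne_of_gt (hmpos m))
      · rw [if_neg h0]; exact h0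
    have hvlim : Tendsto v atTop (nhds u) := by
      rw [tendsto_pi_nhds]
      intro i
      simp only [hvdef]
      by_cases h0 : u i = 0
      · simp only [if_pos h0]
        rw [h0]
        have hinv : Tendsto (fun m : ℕ => ((m : ℝ) + 1)⁻¹) atTop (nhds 0) :=
          tendsto_inv_atTop_zero.comp
            (tendsto_atTop_add_const_right _ 1 tendsto_natCast_atTop_atTop)
        have := (Complex.continuous_ofReal.tendsto 0).comp hinv
        simpa [Function.comp_def] using this
      · simp only [if_neg h0]
        exact tendsto_const_nhds
    have hsv : Tendsto (fun m => s • v m) atTop (nhds (s • u)) := hvlim.const_smul s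
    have hgl : Tendsto (fun m => g (s • v m)) atTop (nhds (g (s • u))) := by
      have hcw : ContinuousWithinAt g K (s • u) := hgc _ (hsmulK _ h1)
      refine hcw.tendsto.comp ?_
      rw [tendsto_nhdsWithin_iff]
      exact ⟨hsv, Filter.Eventually.of_forall fun m => hsmulK _ (hv1 m)⟩
    refine le_of_tendsto hgl.norm (Filter.Eventually.of_forall fun m => ?_)
    exact key n (v m) (hv1 m) (hv2 m) fun i hi => absurd i.isLt (by omega)
  have hfin := key2 t ht
  have hd : dist (g (s • t)) (g t) < ε / 2 := hδ _ (hsmulK _ ht) _ ht (hsdist t ht)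
  have htri := norm_sub_norm_le (g t) (g (s • t))
  rw [← dist_eq_norm, dist_comm] at htri
  linarith

lemma HT.torus_subset_closure {n : ℕ} : torusSet n ⊆ closure (hartogsTriangle n) := by
  intro w hw
  rw [HT.mem_torus_iff] at hw
  obtain ⟨t, ht1, ht2⟩ := HT.psi_sect (z := w) (fun i j _ => by rw [hw i, hw j])
    (fun i => (hw i).le)
    (fun i _ h0 => by have hwi := hw i; rw [h0] at hwi; simp at hwi)
  rw [← ht2]
  exact HT.psi_mem_closure ht1

lemma HT.torus_subset_frontier {n : ℕ} (hn : 2 ≤ n) :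
    torusSet n ⊆ frontier (hartogsTriangle n) := by
  intro w hw
  have hcl := HT.torus_subset_closure hw
  have hnotin : w ∉ hartogsTriangle n := by
    intro hmem
    obtain ⟨hmono, _⟩ := HT.mem_triangle_iff.mp hmem
    have h01 : (⟨0, by omega⟩ : Fin n) < (⟨1, by omega⟩ : Fin n) := by
      rw [Fin.lt_def]; norm_num
    have hlt := hmono _ _ h01
    rw [HT.mem_torus_iff] at hw
    rw [hw, hw] at hlt
    exact lt_irrefl 1 hlt
  rw [frontier, HT.triangle_open.interior_eq]
  exact ⟨hcl, hnotin⟩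

lemma HT.biSup_norm_le {α : Type*} (f : α → ℂ) (T : Set α) (M : ℝ)
    (hM : ∀ x ∈ T, ‖f x‖ ≤ M) {u : α} (hu : u ∈ T) : ‖f u‖ ≤ ⨆ w ∈ T, ‖f w‖ := by
  have hb : BddAbove (Set.range fun w => ⨆ _ : w ∈ T, ‖f w‖) := by
    refine ⟨max M 0, ?_⟩
    rintro y ⟨w, rfl⟩
    show (⨆ _ : w ∈ T, ‖f w‖) ≤ max M 0
    by_cases hw : w ∈ T
    · haveI : Nonempty (w ∈ T) := ⟨hw⟩
      rw [ciSup_const]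
      exact le_max_of_le_left (hM w hw)
    · haveI : IsEmpty (w ∈ T) := ⟨hw⟩
      rw [Real.iSup_of_isEmpty]
      exact le_max_right _ _
  calc ‖f u‖ = ⨆ _ : u ∈ T, ‖f u‖ := by
        haveI : Nonempty (u ∈ T) := ⟨hu⟩
        rw [ciSup_const]
    _ ≤ ⨆ w ∈ T, ‖f w‖ := le_ciSup hb u

lemma HT.norm_one_add_lt {a : ℂ} (h1 : ‖a‖ ≤ 1) (h2 : a ≠ 1) : ‖1 + a‖ < 2 := by
  by_contra hcon
  push_neg at hcon
  have hle : ‖(1 : ℂ) + a‖ ≤ 2 := by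
    calc ‖(1 : ℂ) + a‖ ≤ ‖(1 : ℂ)‖ + ‖a‖ := norm_add_le _ _
      _ ≤ 2 := by rw [norm_one]; linarith
  have heq : ‖(1 : ℂ) + a‖ = 2 := le_antisymm hle hcon
  have e1 : ‖(1 + a)‖ = 2 := by exact heq
  have e2 : ‖a‖ ≤ 1 := by exact h1
  have f1 := Complex.sq_norm (1 + a)
  have f2 := Complex.sq_norm a
  rw [e1] at f1
  rw [Complex.normSq_apply] at f1 f2
  simp only [Complex.add_re, Complex.add_im, Complex.one_re, Complex.one_im] at f1
  have habs : 0 ≤ ‖a‖ := norm_nonneg _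
  have g2 : a.re * a.re + a.im * a.im ≤ 1 := by nlinarith
  have hre : a.re = 1 := by nlinarith
  have him : a.im = 0 := by nlinarith
  exact h2 (Complex.ext (by rw [hre, Complex.one_re]) (by rw [him, Complex.one_im]))

lemma HT.peak_at_self {n : ℕ} {w : Fin n → ℂ} (hw : ∀ i, ‖w i‖ = 1) :
    (∏ i, ((1 + (starRingEnd ℂ) (w i) * w i) / 2)) = 1 := by
  refine Finset.prod_eq_one fun i _ => ?_
  have hc : (starRingEnd ℂ) (w i) * w i = 1 := by
    rw [mul_comm, Complex.mul_conj, Complex.normSq_eq_norm_sq, hw i]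
    norm_num
  rw [hc]
  norm_num

lemma HT.peak_lt {n : ℕ} {w u : Fin n → ℂ} (hw : ∀ i, ‖w i‖ = 1) (hu : ∀ i, ‖u i‖ ≤ 1)
    (hne : u ≠ w) : ‖∏ i, ((1 + (starRingEnd ℂ) (w i) * u i) / 2)‖ < 1 := by
  rw [norm_prod]
  obtain ⟨j, hj⟩ : ∃ j, u j ≠ w j := by
    by_contra hcon
    push_neg at hcon
    exact hne (funext hcon)
  have htwo : ‖(2 : ℂ)‖ = 2 := by norm_num
  have hfac : ∀ i, ‖(1 + (starRingEnd ℂ) (w i) * u i) / 2‖ ≤ 1 := by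
    intro i
    rw [norm_div, htwo]
    have hbd : ‖(1 : ℂ) + (starRingEnd ℂ) (w i) * u i‖ ≤ 2 := by
      have hm : ‖(starRingEnd ℂ) (w i) * u i‖ ≤ 1 := by
        rw [norm_mul, RCLike.norm_conj, hw i, one_mul]
        exact hu i
      calc ‖(1 : ℂ) + (starRingEnd ℂ) (w i) * u i‖
          ≤ ‖(1 : ℂ)‖ + ‖(starRingEnd ℂ) (w i) * u i‖ := norm_add_le _ _
        _ ≤ 2 := by rw [norm_one]; linarith
    linarith
  have hjlt : ‖(1 + (starRingEnd ℂ) (w j) * u j) / 2‖ < 1 := by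
    rw [norm_div, htwo]
    have ha : ‖(starRingEnd ℂ) (w j) * u j‖ ≤ 1 := by
      rw [norm_mul, RCLike.norm_conj, hw j, one_mul]
      exact hu j
    have hne1 : (starRingEnd ℂ) (w j) * u j ≠ 1 := by
      intro hcon
      apply hj
      have hmul := congrArg (fun z => w j * z) hcon
      simp only [mul_one] at hmul
      rw [← mul_assoc, Complex.mul_conj, Complex.normSq_eq_norm_sq,
        hw j] at hmul
      norm_num at hmul
      exact hmul
    have := HT.norm_one_add_lt ha hne1
    linarith
  rw [← Finset.mul_prod_erase Finset.univ _ (Finset.mem_univ j)]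
  calc ‖(1 + (starRingEnd ℂ) (w j) * u j) / 2‖ *
        ∏ i ∈ Finset.univ.erase j, ‖(1 + (starRingEnd ℂ) (w i) * u i) / 2‖
      ≤ ‖(1 + (starRingEnd ℂ) (w j) * u j) / 2‖ * 1 := by
        refine mul_le_mul_of_nonneg_left ?_ (norm_nonneg _)
        exact Finset.prod_le_one (fun i _ => norm_nonneg _) fun i _ => hfac i
    _ < 1 := by rw [mul_one]; exact hjlt

lemma HT.triangle_nonempty {n : ℕ} : (hartogsTriangle n).Nonempty := by
  refine ⟨fun i => ((((i : ℕ) + 1 : ℝ) / ((n : ℝ) + 1) : ℝ) : ℂ), ?_⟩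
  have hnorm : ∀ i : Fin n, ‖((((i : ℕ) + 1 : ℝ) / ((n : ℝ) + 1) : ℝ) : ℂ)‖
      = ((i : ℕ) + 1 : ℝ) / ((n : ℝ) + 1) := by
    intro i
    rw [Complex.norm_real, Real.norm_eq_abs, abs_of_pos (by positivity)]
  refine HT.mem_triangle_iff.mpr ⟨fun i j hij => ?_, fun i => ?_⟩
  · rw [hnorm i, hnorm j]
    have hij' : ((i : ℕ) : ℝ) < ((j : ℕ) : ℝ) := by exact_mod_cast hij
    have hpos : (0 : ℝ) < (n : ℝ) + 1 := by positivity
    exact (div_lt_div_iff_of_pos_right hpos).mpr (by linarith)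
  · rw [hnorm i]
    rw [div_lt_one (by positivity)]
    have := i.isLt
    exact_mod_cast Nat.add_lt_add_right this 1

/-- `𝕋ⁿ` is the distinguished boundary of the `n`-dimensional Hartogs triangle: it lies in
the topological boundary of `△ₙ`, it is a maximum-modulus set for functions continuous on
`closure △ₙ` and holomorphic on `△ₙ`, and any closed maximum-modulus subset of the
boundary of `△ₙ` contains `𝕋ⁿ`. -/
theorem stmt1 (n : ℕ) (hn : 2 ≤ n) :
    torusSet n ⊆ frontier (hartogsTriangle n) ∧
    (∀ f : (Fin n → ℂ) → ℂ, ContinuousOn f (closure (hartogsTriangle n)) →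
      DifferentiableOn ℂ f (hartogsTriangle n) →
      ∀ z ∈ hartogsTriangle n, ‖f z‖ ≤ ⨆ w ∈ torusSet n, ‖f w‖) ∧
    (∀ S : Set (Fin n → ℂ), IsClosed S → S ⊆ frontier (hartogsTriangle n) →
      (∀ f : (Fin n → ℂ) → ℂ, ContinuousOn f (closure (hartogsTriangle n)) →
        DifferentiableOn ℂ f (hartogsTriangle n) →
        ∀ z ∈ hartogsTriangle n, ‖f z‖ ≤ ⨆ w ∈ S, ‖f w‖) →
      torusSet n ⊆ S) := by
  refine ⟨HT.torus_subset_frontier hn, ?_, ?_⟩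
  · -- part (b)
    intro f hfc hfd z hz
    obtain ⟨hmono, hlt⟩ := HT.mem_triangle_iff.mp hz
    have hmono' : ∀ i j : Fin n, i ≤ j → ‖z i‖ ≤ ‖z j‖ := by
      intro i j hij
      rcases lt_or_eq_of_le hij with h | h
      · exact (hmono i j h).le
      · rw [h]
    have hnz : ∀ i : Fin n, (i : ℕ) ≠ 0 → z i ≠ 0 := by
      intro i hi h0
      have h0i : (⟨0, by omega⟩ : Fin n) < i := by
        rw [Fin.lt_def]
        simp only [Fin.val_mk]
        omega
      have hlt0 := hmono _ _ h0i
      rw [h0] at hlt0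
      simp only [norm_zero] at hlt0
      exact absurd hlt0 (not_lt.mpr (norm_nonneg _))
    obtain ⟨t, ht1, ht2⟩ := HT.psi_sect hmono' (fun i => (hlt i).le) hnz
    obtain ⟨M, hM⟩ := HT.isCompact_closure.exists_bound_of_continuousOn hfc
    have hres := HT.polydisc_max (fun u => f (HT.psi u)) (⨆ w ∈ torusSet n, ‖f w‖)
      (hfc.comp HT.psi_continuous.continuousOn fun u hu => HT.psi_mem_closure hu)
      (fun u hu1 hu2 => DifferentiableAt.comp u
        (hfd.differentiableAt (HT.triangle_open.mem_nhds (HT.psi_mem_triangle hu1 hu2)))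
        (HT.psi_differentiableAt u))
      (fun w hw => HT.biSup_norm_le f (torusSet n) M
        (fun x hx => hM x (HT.torus_subset_closure hx))
        (HT.mem_torus_iff.mpr (HT.psi_mem_torus hw)))
      t ht1
    simpa [ht2] using hres
  · -- part (c)
    intro S hScl hSfr hmax w hw
    by_contra hwS
    have hw' := HT.mem_torus_iff.mp hw
    set F : (Fin n → ℂ) → ℂ := fun z => ∏ i, ((1 + (starRingEnd ℂ) (w i) * z i) / 2) with hFdef
    have hFc : Continuous F := by
      refine continuous_finset_prod _ fun i _ => ?_
      exact (continuous_const.add (continuous_const.mul (continuous_apply i))).div_const 2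
    have hFd : Differentiable ℂ F := by
      intro x
      show DifferentiableAt ℂ (fun z : Fin n → ℂ => ∏ i, ((1 + (starRingEnd ℂ) (w i) * z i) / 2)) x
      refine HT.diffAt_finset_prod Finset.univ
        (fun i (z : Fin n → ℂ) => (1 + (starRingEnd ℂ) (w i) * z i) / 2) x fun i _ => ?_
      have hbase : DifferentiableAt ℂ (fun z : Fin n → ℂ => 1 + (starRingEnd ℂ) (w i) * z i) x :=
        (differentiableAt_const _).add
          ((differentiableAt_const _).mul (differentiableAt_apply (𝕜 := ℂ) i x))
      simp only [div_eq_mul_inv]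
      exact hbase.mul_const _
    obtain ⟨z₀, hz₀⟩ := HT.triangle_nonempty (n := n)
    have hSsub : ∀ u ∈ S, (∀ i, ‖u i‖ ≤ 1) ∧ u ≠ w := by
      intro u hu
      constructor
      · exact fun i => HT.closure_subset (frontier_subset_closure (hSfr hu)) i
      · intro hww
        exact hwS (hww ▸ hu)
    by_cases hSne : S.Nonempty
    · have hScomp : IsCompact S := by
        refine (isCompact_closedBall (0 : Fin n → ℂ) 1).of_isClosed_subset hScl ?_
        intro u hu
        rw [← HT.polyball_eq]
        exact (hSsub u hu).1
      obtain ⟨u₀, hu₀S, hmax₀⟩ := hScomp.exists_isMaxOn hSne (hFc.norm.continuousOn)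
      have hcle : (⨆ v ∈ S, ‖F v‖) ≤ ‖F u₀‖ := by
        refine ciSup_le fun v => ?_
        show (⨆ _ : v ∈ S, ‖F v‖) ≤ ‖F u₀‖
        by_cases hv : v ∈ S
        · haveI : Nonempty (v ∈ S) := ⟨hv⟩
          rw [ciSup_const]
          exact hmax₀ hv
        · haveI : IsEmpty (v ∈ S) := ⟨hv⟩
          rw [Real.iSup_of_isEmpty]
          exact norm_nonneg _
      have hu₀lt : ‖F u₀‖ < 1 := HT.peak_lt hw' (hSsub u₀ hu₀S).1 (hSsub u₀ hu₀S).2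
      have hwcl := HT.torus_subset_closure hw
      obtain ⟨zs, hzs, hzlim⟩ := mem_closure_iff_seq_limit.mp hwcl
      have hFlim : Tendsto (fun m => ‖F (zs m)‖) atTop (nhds 1) := by
        have h1 : Tendsto (fun m => F (zs m)) atTop (nhds (F w)) := (hFc.tendsto w).comp hzlim
        have hFw : F w = 1 := HT.peak_at_self hw'
        rw [hFw] at h1
        simpa using h1.norm
      have hev : ∀ᶠ m in atTop, (⨆ v ∈ S, ‖F v‖) < ‖F (zs m)‖ :=
        hFlim.eventually (eventually_gt_nhds (lt_of_le_of_lt hcle hu₀lt))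
      obtain ⟨m, hm⟩ := hev.exists
      have hcontr := hmax F hFc.continuousOn hFd.differentiableOn (zs m) (hzs m)
      exact absurd hcontr (not_le.mpr hm)
    · have hSe : S = ∅ := Set.not_nonempty_iff_eq_empty.mp hSne
      have h1 := hmax (fun _ => 1) continuousOn_const (differentiableOn_const 1) z₀ hz₀
      rw [hSe] at h1
      have h2 : (⨆ v ∈ (∅ : Set (Fin n → ℂ)), ‖(1 : ℂ)‖) = 0 := by
        have hallz : ∀ v : Fin n → ℂ, (⨆ _ : v ∈ (∅ : Set (Fin n → ℂ)), ‖(1 : ℂ)‖) = 0 := by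
          intro v
          haveI : IsEmpty (v ∈ (∅ : Set (Fin n → ℂ))) := ⟨fun h => h⟩
          exact Real.iSup_of_isEmpty _
        calc (⨆ v ∈ (∅ : Set (Fin n → ℂ)), ‖(1 : ℂ)‖)
            = ⨆ _ : Fin n → ℂ, (0 : ℝ) := iSup_congr hallz
          _ = 0 := ciSup_const
      rw [h2, norm_one] at h1
      linarith
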